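/- The characteristic polynomial of the 3×3 Bloch Hamiltonian H(k) of the rhombic lattice at flux Φ = π is independent of k; in particular every eigenvalue band of H(k) at Φ = π is flat (constant in k). -/

import Mathlib

open Complex Real

/-- The Bloch Hamiltonian of the rhombic lattice at flux `Φ = π` and momentum `k`:
`H(k)[0,1] = e^{iπ} + e^{ik} = −1 + e^{ik}`, `H(k)[0,2] = 1 + e^{ik}`, Hermitian
conjugates below the diagonal, zeros elsewhere. -/
noncomputable def rhombicBlochPi (k : ℝ) : Matrix (Fin 3) (Fin 3) ℂ :=
  !![0, -1 + Complex.exp ((k : ℂ) * Complex.I), 1 + Complex.exp ((k : ℂ) * Complex.I);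
     -1 + Complex.exp (-(k : ℂ) * Complex.I), 0, 0;
     1 + Complex.exp (-(k : ℂ) * Complex.I), 0, 0]

open Polynomial Matrix in
lemma rhombicBlochPi_charpoly (k : ℝ) :
    (rhombicBlochPi k).charpoly = X ^ 3 - C 4 * X := by
  have h : Complex.exp ((k:ℂ)*Complex.I) * Complex.exp (-((k:ℂ)*Complex.I)) = 1 := by
    rw [← Complex.exp_add]; ring_nf; exact Complex.exp_zero
  have h' : (C (Complex.exp ((k:ℂ)*Complex.I)) *
      C (Complex.exp (-((k:ℂ)*Complex.I))) : ℂ[X]) = 1 := by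
    rw [← C_mul, h, C_1]
  rw [Matrix.charpoly, Matrix.det_fin_three]
  simp (config := { decide := true }) only [charmatrix_apply, rhombicBlochPi, Matrix.diagonal,
    Matrix.of_apply, Matrix.cons_val', Matrix.cons_val_zero, Matrix.cons_val_one, Matrix.head_cons,
    Matrix.empty_val', Matrix.cons_val_fin_one, Matrix.head_fin_const,
    Matrix.cons_val_two, Matrix.tail_cons, if_true, if_false]
  norm_num
  simp only [neg_mul, map_ofNat]
  linear_combination (-2 * X : ℂ[X]) * h'

open Polynomial Matrix in
lemma mem_spec_iff_charpoly (M : Matrix (Fin 3) (Fin 3) ℂ) (x : ℂ) :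
    x ∈ spectrum ℂ M ↔ M.charpoly.eval x = 0 := by
  rw [spectrum.mem_iff, Matrix.isUnit_iff_isUnit_det, isUnit_iff_ne_zero, not_ne_iff,
    Matrix.charpoly, _root_.eval_det, matPolyEquiv_charmatrix]
  simp [Algebra.algebraMap_eq_smul_one, Matrix.scalar_apply, Matrix.smul_one_eq_diagonal]

/-- At flux `Φ = π` the characteristic polynomial of the rhombic-lattice Bloch
Hamiltonian is independent of `k`; in particular every eigenvalue band is flat. -/
theorem stmt_2 :
    (∀ k k' : ℝ, (rhombicBlochPi k).charpoly = (rhombicBlochPi k').charpoly) ∧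
      (∀ k k' : ℝ, spectrum ℂ (rhombicBlochPi k) = spectrum ℂ (rhombicBlochPi k')) := by
  have hcp : ∀ k k' : ℝ, (rhombicBlochPi k).charpoly = (rhombicBlochPi k').charpoly := by
    intro k k'
    rw [rhombicBlochPi_charpoly, rhombicBlochPi_charpoly]
  refine ⟨hcp, fun k k' => ?_⟩
  ext x
  rw [mem_spec_iff_charpoly, mem_spec_iff_charpoly, hcp k k']
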